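/- (Birkhoff's lemma) Let k be a field of characteristic zero, n ≥ 1 an integer and p a prime number. Let A, B, C be elements of GL_n(k) such that the commutator [A,B] = ABA⁻¹B⁻¹ equals C, such that [A,C] = [B,C] = Id, and such that C ≠ Id and C^p = Id. Then p ≤ n. -/

import Mathlib

open Polynomial

open scoped commutatorElement

lemma birkhoff_aux {K : Type*} [Field K] [IsAlgClosed K] [CharZero K] {M : Type*} [AddCommGroup M]
    [Module K M] [FiniteDimensional K M] (f : Module.End K M) {p : ℕ} (hp : p.Prime)
    (hf : f ^ p = 1) (hf1 : f ≠ 1) :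
    ∃ μ : K, μ ≠ 1 ∧ μ ^ p = 1 ∧ f.HasEigenvalue μ := by
  rcases subsingleton_or_nontrivial M with hM | hM
  · exact absurd (Subsingleton.elim f 1) hf1
  have hint : IsIntegral K f := Algebra.IsIntegral.isIntegral f
  set P := minpoly K f with hP
  have haev : aeval f ((X : K[X]) ^ p - 1) = 0 := by
    simp [map_sub, map_pow, aeval_X, hf]
  have hPdvd : P ∣ (X : K[X]) ^ p - 1 := minpoly.dvd K f haev
  have hsep : ((X : K[X]) ^ p - 1).Separable := by
    have := Polynomial.separable_X_pow_sub_C (F := K) (1 : K)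
      (by exact_mod_cast (Nat.cast_ne_zero (R := K)).mpr hp.ne_zero) one_ne_zero
    simpa using this
  have hsq : Squarefree ((X : K[X]) ^ p - 1) := hsep.squarefree
  have hmonic : P.Monic := minpoly.monic hint
  have hsplits : P.Splits := IsAlgClosed.splits P
  have hroot : ∃ μ ∈ P.roots, μ ≠ 1 := by
    by_contra h
    push_neg at h
    have hfac := hsplits.eq_prod_roots_of_monic hmonic
    set d := Multiset.card P.roots with hdd
    have hfac2 : P = (X - 1 : K[X]) ^ d := by
      have hmc : Multiset.map (fun a => (X : K[X]) - C a) P.roots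
          = Multiset.map (fun _ => (X : K[X]) - C 1) P.roots :=
        Multiset.map_congr rfl (fun a ha => by rw [h a ha])
      rw [hfac, hmc, Multiset.map_const', Multiset.prod_replicate, map_one, hdd]
    rcases Nat.lt_or_ge d 2 with hd | hd
    · interval_cases d
      · rw [pow_zero] at hfac2
        have := minpoly.natDegree_pos hint
        rw [← hP, hfac2] at this
        simp at this
      · rw [pow_one] at hfac2
        have := minpoly.aeval K f
        rw [← hP, hfac2] at this
        simp only [map_sub, aeval_X, map_one, sub_eq_zero] at this
        exact hf1 this
    · have : (X - 1 : K[X]) * (X - 1) ∣ (X : K[X]) ^ p - 1 := by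
        refine dvd_trans ?_ hPdvd
        rw [hfac2, ← sq]
        exact pow_dvd_pow _ hd
      have := hsq _ this
      rw [show (X - 1 : K[X]) = X - C 1 by rw [map_one]] at this
      exact Polynomial.not_isUnit_X_sub_C 1 this
  obtain ⟨μ, hμmem, hμ1⟩ := hroot
  have hμroot : P.IsRoot μ := by
    have hP0 : P ≠ 0 := minpoly.ne_zero hint
    exact (mem_roots hP0).mp hμmem
  refine ⟨μ, hμ1, ?_, Module.End.hasEigenvalue_iff_isRoot.mpr hμroot⟩
  obtain ⟨Q, hQ⟩ := hPdvd
  have : ((X : K[X]) ^ p - 1).eval μ = 0 := by rw [hQ, eval_mul, hμroot, zero_mul]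
  simpa [sub_eq_zero] using this

/-- (Birkhoff's lemma.) Let `k` be a field of characteristic zero and let `A`, `B`, `C` be
invertible `n × n` matrices over `k` with `[A,B] = C`, `[A,C] = [B,C] = 1`, `C ≠ 1` and
`C^p = 1` for a prime `p`.  Then `p ≤ n`. -/
theorem birkhoff_lemma {k : Type*} [Field k] [CharZero k] {n : ℕ} (hn : 1 ≤ n) {p : ℕ}
    (hp : p.Prime) (A B C : Matrix.GeneralLinearGroup (Fin n) k)
    (hABC : ⁅A, B⁆ = C) (hAC : ⁅A, C⁆ = 1) (hBC : ⁅B, C⁆ = 1)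
    (hC : C ≠ 1) (hCp : C ^ p = 1) :
    p ≤ n := by
  classical
  haveI := Fact.mk hp
  let K := AlgebraicClosure k
  haveI : CharZero K := charZero_of_injective_algebraMap (algebraMap k K).injective
  let M := Fin n → K
  let F : Matrix (Fin n) (Fin n) k →+* Module.End K M :=
    ((Matrix.toLinAlgEquiv' :
      Matrix (Fin n) (Fin n) K ≃ₐ[K] Module.End K M).toRingEquiv :
        Matrix (Fin n) (Fin n) K ≃+* Module.End K M).toRingHom.comp
      ((algebraMap k K).mapMatrix)
  have hFinj : Function.Injective F := by
    intro x y hxy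
    have h2 : ((algebraMap k K).mapMatrix x : Matrix (Fin n) (Fin n) K)
        = (algebraMap k K).mapMatrix y :=
      (Matrix.toLinAlgEquiv' (R := K) (n := Fin n)).injective hxy
    ext i j
    have h3 := congrArg (fun m => m i j) h2
    simp only [RingHom.mapMatrix_apply, Matrix.map_apply] at h3
    exact (algebraMap k K).injective h3
  let Φ : Matrix.GeneralLinearGroup (Fin n) k →* (Module.End K M)ˣ :=
    Units.map F.toMonoidHom
  set a := Φ A with ha_def
  set b := Φ B with hb_def
  set c := Φ C with hc_def
  have hc : c = a * b * a⁻¹ * b⁻¹ := by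
    rw [hc_def, ← hABC, map_commutatorElement]
    rfl
  have hcomm_a : Commute c a := by
    have : ⁅a, c⁆ = 1 := by rw [ha_def, hc_def, ← map_commutatorElement, hAC, map_one]
    exact (commutatorElement_eq_one_iff_commute.mp this).symm
  have hcomm_b : Commute c b := by
    have : ⁅b, c⁆ = 1 := by rw [hb_def, hc_def, ← map_commutatorElement, hBC, map_one]
    exact (commutatorElement_eq_one_iff_commute.mp this).symm
  have hc1 : c ≠ 1 := by
    intro h
    exact hC (Units.map_injective hFinj (by rw [← hc_def, h, map_one]))
  have hcp : c ^ p = 1 := by rw [hc_def, ← map_pow, hCp, map_one]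
  set Cl : Module.End K M := (c : Module.End K M) with hCl_def
  have hClp : Cl ^ p = 1 := by
    rw [hCl_def, ← Units.val_pow_eq_pow_val, hcp, Units.val_one]
  have hCl1 : Cl ≠ 1 := fun h => hc1 (Units.ext h)
  obtain ⟨μ, hμ1, hμp, hμeig⟩ := birkhoff_aux Cl hp hClp hCl1
  set V := Module.End.eigenspace Cl μ with hV_def
  have key : ∀ u : (Module.End K M)ˣ, Commute c u →
      ∀ x ∈ V, (u : Module.End K M) x ∈ V := by
    intro u hu x hx
    have hx' : Cl x = μ • x := Module.End.mem_eigenspace_iff.mp hx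
    have hcu : Cl * (u : Module.End K M) = (u : Module.End K M) * Cl := by
      have := congrArg Units.val hu.eq
      simpa using this
    rw [hV_def, Module.End.mem_eigenspace_iff]
    calc Cl ((u : Module.End K M) x) = (Cl * (u : Module.End K M)) x := rfl
      _ = ((u : Module.End K M) * Cl) x := by rw [hcu]
      _ = (u : Module.End K M) (Cl x) := rfl
      _ = (u : Module.End K M) (μ • x) := by rw [hx']
      _ = μ • (u : Module.End K M) x := map_smul _ _ _
  have hia := key a hcomm_a
  have hia' := key a⁻¹ hcomm_a.inv_right
  have hib := key b hcomm_b
  have hib' := key b⁻¹ hcomm_b.inv_right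
  have hic := key c (Commute.refl c)
  set rA := (a : Module.End K M).restrict hia with hrA
  set rA' := ((a⁻¹ : (Module.End K M)ˣ) : Module.End K M).restrict hia' with hrA'
  set rB := (b : Module.End K M).restrict hib with hrB
  set rB' := ((b⁻¹ : (Module.End K M)ˣ) : Module.End K M).restrict hib' with hrB'
  set rC := Cl.restrict hic with hrC
  have unit_cancel : ∀ (u : (Module.End K M)ˣ) h h',
      ((u : Module.End K M).restrict h) * (((u⁻¹ : (Module.End K M)ˣ) :
        Module.End K M).restrict h') = (1 : Module.End K V) := by
    intro u h h'
    apply LinearMap.ext; intro x; apply Subtype.ext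
    simp only [Module.End.mul_apply, Module.End.one_apply, LinearMap.restrict_coe_apply]
    rw [← Module.End.mul_apply, u.mul_inv, Module.End.one_apply]
  have hAA' : rA * rA' = 1 := unit_cancel a hia hia'
  have hBB' : rB * rB' = 1 := unit_cancel b hib hib'
  have hrCeq : rC = rA * rB * rA' * rB' := by
    apply LinearMap.ext; intro x; apply Subtype.ext
    have h1 := DFunLike.congr_fun (congrArg Units.val hc) (x : M)
    simp only [Units.val_mul, Module.End.mul_apply] at h1
    simpa only [hrC, hrA, hrB, hrA', hrB', Module.End.mul_apply, LinearMap.restrict_coe_apply] using h1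
  have hdetC : LinearMap.det rC = 1 := by
    rw [hrCeq, map_mul, map_mul, map_mul]
    have h2 : LinearMap.det rA * LinearMap.det rB * LinearMap.det rA' * LinearMap.det rB'
        = (LinearMap.det rA * LinearMap.det rA') * (LinearMap.det rB * LinearMap.det rB') := by
      ring
    rw [h2, ← map_mul, ← map_mul, hAA', hBB', map_one, mul_one]
  have hrCsmul : rC = μ • (1 : Module.End K V) := by
    apply LinearMap.ext; intro x; apply Subtype.ext
    have h4 := Module.End.mem_eigenspace_iff.mp x.2
    simpa only [LinearMap.smul_apply, Module.End.one_apply, SetLike.val_smul,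
      hrC, LinearMap.restrict_coe_apply] using h4
  have hμpow : μ ^ (Module.finrank K V) = 1 := by
    have hds := LinearMap.det_smul μ (1 : Module.End K V)
    rw [← hrCsmul, hdetC, map_one, mul_one] at hds
    exact hds.symm
  have hord : orderOf μ = p := orderOf_eq_prime hμp hμ1
  have hdvd : p ∣ Module.finrank K V := hord ▸ orderOf_dvd_of_pow_eq_one hμpow
  have hVne : V ≠ ⊥ := hμeig
  haveI : Nontrivial V := Submodule.nontrivial_iff_ne_bot.mpr hVne
  have hpos : 0 < Module.finrank K V := Module.finrank_pos
  have hle : Module.finrank K V ≤ n := by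
    have h3 := Submodule.finrank_le V
    rwa [Module.finrank_fin_fun] at h3
  exact le_trans (Nat.le_of_dvd hpos hdvd) hle
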